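/- If f is L-smooth and at iteration k of a direct-search method the sufficient decrease condition fails for every poll direction (i.e., f(x_k + α_k d) ≥ f(x_k) - ρ(α_k) for all d ∈ D_k with α_k > 0), then for every d ∈ D_k one has -⟨∇f(x_k), d⟩ ≤ α_k·L·‖d‖²/2 + ρ(α_k)/α_k. -/

import Mathlib

local notation "⟪" x ", " y "⟫" => @inner ℝ _ _ x y

theorem descent_lemma {n : ℕ} (f : EuclideanSpace ℝ (Fin n) → ℝ)
    (g : EuclideanSpace ℝ (Fin n) → EuclideanSpace ℝ (Fin n))
    (L : ℝ)
    (hgrad : ∀ y, HasGradientAt f (g y) y)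
    (hlip : ∀ y z, ‖g y - g z‖ ≤ L * ‖y - z‖)
    (x s : EuclideanSpace ℝ (Fin n)) :
    f (x + s) ≤ f x + ⟪g x, s⟫ + L / 2 * ‖s‖ ^ 2 := by
  set γ : ℝ → EuclideanSpace ℝ (Fin n) := fun t => x + t • s with hγ
  have hcontg : Continuous g := by
    rw [Metric.continuous_iff]
    intro b ε hε
    rcases le_or_gt L 0 with hL | hL
    · exact ⟨1, one_pos, fun a _ => by
        rw [dist_eq_norm]
        exact lt_of_le_of_lt (le_trans (hlip a b)
          (mul_nonpos_of_nonpos_of_nonneg hL (norm_nonneg _))) hε⟩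
    · exact ⟨ε / L, div_pos hε hL, fun a ha => by
        rw [dist_eq_norm]
        calc ‖g a - g b‖ ≤ L * ‖a - b‖ := hlip a b
        _ < L * (ε / L) := by
            apply mul_lt_mul_of_pos_left _ hL
            rw [← dist_eq_norm]; exact ha
        _ = ε := mul_div_cancel₀ ε hL.ne'⟩
  have hγc : Continuous γ := by continuity
  have hderiv : ∀ t : ℝ, HasDerivAt (f ∘ γ) ⟪g (γ t), s⟫ t := by
    intro t
    have h1 : HasDerivAt γ s t := by
      have : HasDerivAt (fun t : ℝ => t • s) ((1:ℝ) • s) t := (hasDerivAt_id t).smul_const s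
      simpa [hγ] using (this.const_add x)
    have h2 := (hgrad (γ t)).hasFDerivAt.comp_hasDerivAt t h1
    simpa using h2
  have hcont : Continuous fun t : ℝ => ⟪g (γ t), s⟫ := by
    exact (continuous_inner.comp ((hcontg.comp hγc).prodMk continuous_const))
  have hftc : ∫ t in (0:ℝ)..1, ⟪g (γ t), s⟫ = f (γ 1) - f (γ 0) := by
    apply intervalIntegral.integral_eq_sub_of_hasDerivAt (fun t _ => hderiv t)
    exact hcont.intervalIntegrable 0 1
  have hbound : ∀ t ∈ Set.Icc (0:ℝ) 1, ⟪g (γ t), s⟫ ≤ ⟪g x, s⟫ + L * ‖s‖ ^ 2 * t := by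
    intro t ht
    have : ⟪g (γ t) - g x, s⟫ ≤ ‖g (γ t) - g x‖ * ‖s‖ := real_inner_le_norm _ _
    have h2 : ‖g (γ t) - g x‖ ≤ L * (t * ‖s‖) := by
      calc ‖g (γ t) - g x‖ ≤ L * ‖γ t - x‖ := hlip _ _
      _ = L * (t * ‖s‖) := by
          rw [hγ]; simp [norm_smul, abs_of_nonneg ht.1]
    have h3 : ⟪g (γ t) - g x, s⟫ ≤ L * (t * ‖s‖) * ‖s‖ :=
      le_trans this (mul_le_mul_of_nonneg_right h2 (norm_nonneg _))
    rw [inner_sub_left] at h3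
    nlinarith [h3]
  have hint : ∫ t in (0:ℝ)..1, ⟪g (γ t), s⟫ ≤ ∫ t in (0:ℝ)..1, (⟪g x, s⟫ + L * ‖s‖ ^ 2 * t) := by
    apply intervalIntegral.integral_mono_on zero_le_one (hcont.intervalIntegrable 0 1)
    · exact (Continuous.intervalIntegrable (by continuity) 0 1)
    · exact hbound
  have hval : ∫ t in (0:ℝ)..1, (⟪g x, s⟫ + L * ‖s‖ ^ 2 * t) = ⟪g x, s⟫ + L * ‖s‖ ^ 2 / 2 := by
    rw [intervalIntegral.integral_add (intervalIntegrable_const)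
      (intervalIntegral.intervalIntegrable_id.const_mul _),
      intervalIntegral.integral_const_mul, integral_id,
      intervalIntegral.integral_const]
    simp
    ring
  have h0 : γ 0 = x := by simp [hγ]
  have h1 : γ 1 = x + s := by simp [hγ]
  rw [hftc, hval, h0, h1] at hint
  linarith

/-- descent-lemma consequence of an unsuccessful direct-search iteration:
if `f` is `L`-smooth and sufficient decrease fails along every poll direction, then
`-⟪∇f(x_k), d⟫ ≤ α_k L ‖d‖²/2 + ρ(α_k)/α_k` for every poll direction `d`. -/
theorem stmt0 {n : ℕ} (f : EuclideanSpace ℝ (Fin n) → ℝ)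
    (g : EuclideanSpace ℝ (Fin n) → EuclideanSpace ℝ (Fin n))
    (L : ℝ) (hL : 0 ≤ L)
    (hgrad : ∀ y, HasGradientAt f (g y) y)
    (hlip : ∀ y z, ‖g y - g z‖ ≤ L * ‖y - z‖)
    (x : EuclideanSpace ℝ (Fin n)) (α : ℝ) (hα : 0 < α)
    (D : Finset (EuclideanSpace ℝ (Fin n)))
    (ρ : ℝ → ℝ) (hρ : ∀ a, 0 ≤ ρ a)
    (hfail : ∀ d ∈ D, f x - ρ α ≤ f (x + α • d)) :
    ∀ d ∈ D, -⟪g x, d⟫ ≤ α * L * ‖d‖ ^ 2 / 2 + ρ α / α := by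
  intro d hd
  have hdl := descent_lemma f g L hgrad hlip x (α • d)
  have hf := hfail d hd
  have hnorm : ‖α • d‖ ^ 2 = α ^ 2 * ‖d‖ ^ 2 := by
    rw [norm_smul]; rw [Real.norm_eq_abs, mul_pow, sq_abs]
  have hinner : ⟪g x, α • d⟫ = α * ⟪g x, d⟫ := real_inner_smul_right _ _ _
  rw [hnorm, hinner] at hdl
  have key : -(α * ⟪g x, d⟫) ≤ L / 2 * (α ^ 2 * ‖d‖ ^ 2) + ρ α := by linarith
  rw [div_add_div _ _ (two_ne_zero) hα.ne', le_div_iff₀ (by positivity)]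
  nlinarith [key]
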